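/- arXiv:1907.06335 — 3 statements merged into one kernel-verified Lean document; each statement's English description precedes it below -/
import Mathlib

section
/- For all complex z not an integer multiple of π, cot(z) = 1/z + 2z · Σ_{n=1}^∞ 1/(z² − n²π²), where the series converges absolutely. -/
open Complex

open Filter Finset Topology

/-- `‖∏ (f j) - 1‖ ≤ ∏ (1 + ‖f j - 1‖) - 1`. -/
lemma norm_prod_sub_one_le' (s : Finset ℕ) (f : ℕ → ℂ) :
    ‖∏ j ∈ s, f j - 1‖ ≤ ∏ j ∈ s, (1 + ‖f j - 1‖) - 1 := by
  classical
  induction s using Finset.cons_induction with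
  | empty => simp
  | cons a t ha ih =>
    have hQ1 : (1 : ℝ) ≤ ∏ j ∈ t, (1 + ‖f j - 1‖) := by
      calc (1:ℝ) = ∏ _j ∈ t, 1 := by simp
        _ ≤ ∏ j ∈ t, (1 + ‖f j - 1‖) :=
          Finset.prod_le_prod (fun j _ => zero_le_one) fun j _ => by
            nlinarith [norm_nonneg (f j - 1)]
    have hPQ : ‖∏ j ∈ t, f j‖ ≤ ∏ j ∈ t, (1 + ‖f j - 1‖) := by
      calc ‖∏ j ∈ t, f j‖ = ‖(∏ j ∈ t, f j - 1) + 1‖ := by ring_nf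
        _ ≤ ‖∏ j ∈ t, f j - 1‖ + 1 := by simpa using norm_add_le (∏ j ∈ t, f j - 1) 1
        _ ≤ (∏ j ∈ t, (1 + ‖f j - 1‖) - 1) + 1 := by linarith
        _ = _ := by ring
    rw [Finset.prod_cons, Finset.prod_cons]
    have h1 : f a * ∏ j ∈ t, f j - 1
        = (f a - 1) * ∏ j ∈ t, f j + (∏ j ∈ t, f j - 1) := by ring
    calc ‖f a * ∏ j ∈ t, f j - 1‖
        ≤ ‖f a - 1‖ * ‖∏ j ∈ t, f j‖ + ‖∏ j ∈ t, f j - 1‖ := by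
          rw [h1]; exact (norm_add_le _ _).trans (by rw [norm_mul])
      _ ≤ ‖f a - 1‖ * ∏ j ∈ t, (1 + ‖f j - 1‖) + (∏ j ∈ t, (1 + ‖f j - 1‖) - 1) := by
          have := mul_le_mul_of_nonneg_left hPQ (norm_nonneg (f a - 1))
          linarith
      _ = (1 + ‖f a - 1‖) * ∏ j ∈ t, (1 + ‖f j - 1‖) - 1 := by ring

lemma prod_one_add_le_exp (s : Finset ℕ) (c : ℕ → ℝ) (hc : ∀ j, 0 ≤ c j) :
    ∏ j ∈ s, (1 + c j) ≤ Real.exp (∑ j ∈ s, c j) := by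
  rw [Real.exp_sum]
  refine Finset.prod_le_prod (fun j _ => by nlinarith [hc j]) fun j _ =>
    Real.add_one_le_exp (c j) |>.trans_eq' (by ring)

/-- Uniform Cauchy criterion for products of `1 + small` terms times a bounded prefactor. -/
lemma uniformCauchy_prod {K : Set ℂ} (g : ℂ → ℂ) (f : ℕ → ℂ → ℂ) (u : ℕ → ℝ)
    (hu : Summable u) (hu0 : ∀ j, 0 ≤ u j) {B : ℝ} (hB : 0 ≤ B)
    (hg : ∀ w ∈ K, ‖g w‖ ≤ B)
    (hf : ∀ j, ∀ w ∈ K, ‖f j w - 1‖ ≤ u j) :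
    UniformCauchySeqOn (fun n w => g w * ∏ j ∈ Finset.range n, f j w) atTop K := by
  rw [Metric.uniformCauchySeqOn_iff]
  intro ε hε
  set T : ℝ := ∑' j, u j with hT
  have hT0 : 0 ≤ T := tsum_nonneg hu0
  -- tail sums tend to 0
  have htail : Tendsto (fun N => ∑' j, u (j + N)) atTop (𝓝 0) := by
    exact_mod_cast tendsto_sum_nat_add u
  set C : ℝ := B * Real.exp T + 1 with hC
  have hCpos : 0 < C := by positivity
  have hkey : Tendsto (fun N => C * (Real.exp (∑' j, u (j + N)) - 1)) atTop (𝓝 0) := by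
    have : Tendsto (fun N => Real.exp (∑' j, u (j + N)) - 1) atTop (𝓝 0) := by
      have := (Real.continuous_exp.tendsto 0).comp htail
      simpa using this.sub_const 1
    simpa using this.const_mul C
  have hev : ∀ᶠ N in atTop, C * (Real.exp (∑' j, u (j + N)) - 1) < ε / 2 := by
    filter_upwards [htail.eventually (eventually_lt_nhds (by positivity : (0:ℝ) < 1)),
      hkey.eventually (eventually_lt_nhds (half_pos hε))] with N _ h2 using h2
  obtain ⟨N, hN⟩ := hev.exists
  refine ⟨N, fun m hm n hn w hw => ?_⟩
  -- symmetric bound: suffices for n ≤ m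
  have main : ∀ a b : ℕ, N ≤ a → a ≤ b → ∀ w ∈ K,
      dist (g w * ∏ j ∈ Finset.range b, f j w) (g w * ∏ j ∈ Finset.range a, f j w) < ε / 2 := by
    intro a b hNa hab w hw
    rw [dist_eq_norm]
    have hsplit : ∏ j ∈ Finset.range b, f j w
        = (∏ j ∈ Finset.range a, f j w) * ∏ j ∈ Finset.Ico a b, f j w := by
      rw [Finset.prod_range_mul_prod_Ico _ hab]
    have h1 : ‖∏ j ∈ Finset.range a, f j w‖ ≤ Real.exp T := by
      calc ‖∏ j ∈ Finset.range a, f j w‖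
          = ‖(∏ j ∈ Finset.range a, f j w - 1) + 1‖ := by ring_nf
        _ ≤ ‖∏ j ∈ Finset.range a, f j w - 1‖ + 1 := by simpa using norm_add_le (∏ j ∈ Finset.range a, f j w - 1) 1
        _ ≤ (∏ j ∈ Finset.range a, (1 + ‖f j w - 1‖) - 1) + 1 := by
            linarith [norm_prod_sub_one_le' (Finset.range a) (fun j => f j w)]
        _ = ∏ j ∈ Finset.range a, (1 + ‖f j w - 1‖) := by ring
        _ ≤ Real.exp (∑ j ∈ Finset.range a, ‖f j w - 1‖) :=
            prod_one_add_le_exp _ _ fun j => norm_nonneg _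
        _ ≤ Real.exp T := by
            apply Real.exp_le_exp.mpr
            exact (Finset.sum_le_sum fun j _ => hf j w hw).trans (hu.sum_le_tsum _
              (fun j _ => hu0 j))
    have h2 : ‖∏ j ∈ Finset.Ico a b, f j w - 1‖ ≤ Real.exp (∑' j, u (j + N)) - 1 := by
      calc ‖∏ j ∈ Finset.Ico a b, f j w - 1‖
          ≤ ∏ j ∈ Finset.Ico a b, (1 + ‖f j w - 1‖) - 1 :=
            norm_prod_sub_one_le' _ _
        _ ≤ Real.exp (∑ j ∈ Finset.Ico a b, ‖f j w - 1‖) - 1 := by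
            linarith [prod_one_add_le_exp (Finset.Ico a b) (fun j => ‖f j w - 1‖)
              (fun j => norm_nonneg _)]
        _ ≤ Real.exp (∑' j, u (j + N)) - 1 := by
            have hsum : ∑ j ∈ Finset.Ico a b, ‖f j w - 1‖ ≤ ∑' j, u (j + N) := by
              have h3 : ∑ j ∈ Finset.Ico a b, ‖f j w - 1‖ ≤ ∑ j ∈ Finset.Ico a b, u j :=
                Finset.sum_le_sum fun j _ => hf j w hw
              have h4 : ∑ j ∈ Finset.Ico a b, u j ≤ ∑' j, u (j + N) := by
                have hmap : ∑ j ∈ Finset.Ico a b, u j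
                    = ∑ j ∈ Finset.Ico (a - N) (b - N), u (j + N) := by
                  rw [Finset.sum_Ico_eq_sum_range, Finset.sum_Ico_eq_sum_range]
                  have h5 : b - N - (a - N) = b - a := by omega
                  rw [h5]
                  apply Finset.sum_congr rfl
                  intro j _
                  congr 1
                  omega
                rw [hmap]
                exact ((summable_nat_add_iff N).mpr hu).sum_le_tsum _ (fun j _ => hu0 _)
              linarith
            exact sub_le_sub_right (Real.exp_le_exp.mpr hsum) 1
    calc ‖g w * ∏ j ∈ Finset.range b, f j w - g w * ∏ j ∈ Finset.range a, f j w‖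
        = ‖g w‖ * (‖∏ j ∈ Finset.range a, f j w‖ * ‖∏ j ∈ Finset.Ico a b, f j w - 1‖) := by
          rw [hsplit, ← norm_mul, ← norm_mul]
          congr 1
          ring
      _ ≤ B * (Real.exp T * (Real.exp (∑' j, u (j + N)) - 1)) := by
          have hn0 : 0 ≤ ‖∏ j ∈ Finset.Ico a b, f j w - 1‖ := norm_nonneg _
          have he : (0:ℝ) ≤ Real.exp (∑' j, u (j + N)) - 1 := by
            have : (0:ℝ) ≤ ∑' j, u (j + N) := tsum_nonneg fun j => hu0 _
            nlinarith [Real.add_one_le_exp (∑' j, u (j + N))]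
          have := mul_le_mul h1 h2 hn0 (Real.exp_nonneg T)
          exact mul_le_mul (hg w hw) this (by positivity) hB
      _ ≤ C * (Real.exp (∑' j, u (j + N)) - 1) := by
          have he : (0:ℝ) ≤ Real.exp (∑' j, u (j + N)) - 1 := by
            have : (0:ℝ) ≤ ∑' j, u (j + N) := tsum_nonneg fun j => hu0 _
            nlinarith [Real.add_one_le_exp (∑' j, u (j + N))]
          have : B * Real.exp T ≤ C := by rw [hC]; linarith
          nlinarith
      _ < ε / 2 := hN
  rcases le_total n m with h | h
  · have := main n m hn h w hw
    linarith
  · have := main m n hm h w hw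
    rw [dist_comm]
    linarith

/-- The Euler sine product converges locally uniformly on ℂ. -/
lemma euler_sin_prod_locally_uniform :
    TendstoLocallyUniformly
      (fun (n : ℕ) (w : ℂ) => (Real.pi : ℂ) * w *
        ∏ j ∈ Finset.range n, ((1 : ℂ) - w ^ 2 / ((j : ℂ) + 1) ^ 2))
      (fun w => Complex.sin ((Real.pi : ℂ) * w)) atTop := by
  rw [tendstoLocallyUniformly_iff_forall_isCompact]
  intro K hK
  obtain ⟨R, hR0, hKR⟩ : ∃ R : ℝ, 0 < R ∧ K ⊆ Metric.closedBall 0 R := by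
    obtain ⟨R, hR⟩ := hK.isBounded.subset_closedBall 0
    exact ⟨max R 1, lt_of_lt_of_le one_pos (le_max_right _ _),
      hR.trans (Metric.closedBall_subset_closedBall (le_max_left _ _))⟩
  have hu : Summable (fun j : ℕ => R ^ 2 / ((j : ℝ) + 1) ^ 2) := by
    have h1 : Summable (fun n : ℕ => 1 / ((n : ℝ)) ^ 2) :=
      Real.summable_one_div_nat_pow.mpr one_lt_two
    have h2 : Summable (fun n : ℕ => 1 / ((n : ℝ) + 1) ^ 2) := by
      have := (summable_nat_add_iff 1).mpr h1
      exact this.congr fun n => by push_cast; ring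
    exact (h2.mul_left (R ^ 2)).congr fun n => by ring
  have hcauchy : UniformCauchySeqOn
      (fun (n : ℕ) (w : ℂ) => (Real.pi : ℂ) * w *
        ∏ j ∈ Finset.range n, ((1 : ℂ) - w ^ 2 / ((j : ℂ) + 1) ^ 2)) atTop K := by
    apply uniformCauchy_prod (g := fun w => (Real.pi : ℂ) * w)
      (f := fun j w => (1 : ℂ) - w ^ 2 / ((j : ℂ) + 1) ^ 2)
      (u := fun j => R ^ 2 / ((j : ℝ) + 1) ^ 2) (B := Real.pi * R) hu
      (fun j => by positivity) (by positivity)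
    · intro w hw
      have := hKR hw
      simp only [Metric.mem_closedBall, dist_zero_right] at this
      rw [norm_mul]
      simp only [Complex.norm_real, Real.norm_eq_abs, abs_of_pos Real.pi_pos]
      exact mul_le_mul_of_nonneg_left this Real.pi_pos.le
    · intro j w hw
      have hwR : ‖w‖ ≤ R := by
        have := hKR hw
        simpa [Metric.mem_closedBall, dist_zero_right] using this
      have : (1 : ℂ) - w ^ 2 / ((j : ℂ) + 1) ^ 2 - 1 = -(w ^ 2 / ((j : ℂ) + 1) ^ 2) := by ring
      rw [this, norm_neg, norm_div, norm_pow, norm_pow]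
      have hj : ‖((j : ℂ) + 1)‖ = (j : ℝ) + 1 := by
        rw [show ((j : ℂ) + 1) = (((j : ℝ) + 1 : ℝ) : ℂ) by push_cast; ring]
        rw [Complex.norm_real, Real.norm_eq_abs, abs_of_pos (by positivity)]
      rw [hj]
      apply div_le_div_of_nonneg_right _ (by positivity)
      · exact pow_le_pow_left₀ (norm_nonneg w) hwR 2
  exact hcauchy.tendstoUniformlyOn_of_tendsto
    fun w _ => Complex.tendsto_euler_sin_prod w

/-- Partial fraction expansion of the cotangent: for `z` not an integer multiple of `π`,
`cot z = 1/z + 2z ∑_{n ≥ 1} 1/(z² - n²π²)`, the series converging absolutely. -/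
theorem cot_partial_fractions (z : ℂ) (hz : ∀ n : ℤ, z ≠ (n : ℂ) * (Real.pi : ℂ)) :
    (Summable fun n : ℕ => ‖1 / (z ^ 2 - ((n : ℂ) + 1) ^ 2 * (Real.pi : ℂ) ^ 2)‖) ∧
      Complex.cos z / Complex.sin z =
        1 / z + 2 * z * ∑' n : ℕ, 1 / (z ^ 2 - ((n : ℂ) + 1) ^ 2 * (Real.pi : ℂ) ^ 2) := by
  have hpi : (Real.pi : ℂ) ≠ 0 := by exact_mod_cast Real.pi_ne_zero
  have hsin : Complex.sin z ≠ 0 := Complex.sin_ne_zero_iff.mpr hz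
  have hz0 : z ≠ 0 := by simpa using hz 0
  obtain ⟨w₀, hw₀def⟩ : ∃ w : ℂ, w = z / (Real.pi : ℂ) := ⟨_, rfl⟩
  have hw0 : w₀ ≠ 0 := by rw [hw₀def]; exact div_ne_zero hz0 hpi
  have hw0pi : (Real.pi : ℂ) * w₀ = z := by rw [hw₀def]; field_simp
  have hcj : ∀ j : ℕ, ((j : ℂ) + 1) ^ 2 ≠ 0 := by
    intro j
    have h1 : ((j : ℂ) + 1) = ((j + 1 : ℕ) : ℂ) := by push_cast; ring
    rw [h1]
    exact pow_ne_zero 2 (by exact_mod_cast Nat.succ_ne_zero j)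
  -- the factors are nonzero
  have hfac : ∀ j : ℕ, z ^ 2 - ((j : ℂ) + 1) ^ 2 * (Real.pi : ℂ) ^ 2 ≠ 0 := by
    intro j h
    have h2 : (z - ((j : ℂ) + 1) * (Real.pi : ℂ)) * (z + ((j : ℂ) + 1) * (Real.pi : ℂ)) = 0 := by
      linear_combination h
    rcases mul_eq_zero.mp h2 with h3 | h3
    · exact hz (j + 1) (by push_cast; linear_combination h3)
    · exact hz (-(j + 1)) (by push_cast; linear_combination h3)
  have hfacw : ∀ j : ℕ, (1 : ℂ) - w₀ ^ 2 / ((j : ℂ) + 1) ^ 2 ≠ 0 := by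
    intro j h
    apply hfac j
    have key : z ^ 2 - ((j : ℂ) + 1) ^ 2 * (Real.pi : ℂ) ^ 2
        = -(((Real.pi : ℂ) ^ 2 * ((j : ℂ) + 1) ^ 2)
            * ((1 : ℂ) - w₀ ^ 2 / ((j : ℂ) + 1) ^ 2)) := by
      rw [← hw0pi]
      field_simp [hcj j]
      ring
    rw [key, h, mul_zero, neg_zero]
  have hne2 : ∀ j : ℕ, w₀ ^ 2 - ((j : ℂ) + 1) ^ 2 ≠ 0 := by
    intro j h
    apply hfacw j
    rw [sub_eq_zero] at h
    rw [h, div_self (hcj j), sub_self]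
  -- summability
  have hsummable : Summable fun n : ℕ => ‖1 / (z ^ 2 - ((n : ℂ) + 1) ^ 2 * (Real.pi : ℂ) ^ 2)‖ := by
    have hg : Summable (fun n : ℕ => 2 / (((n : ℝ) + 1) ^ 2 * Real.pi ^ 2)) := by
      have h1 : Summable (fun n : ℕ => 1 / ((n : ℝ)) ^ 2) :=
        Real.summable_one_div_nat_pow.mpr one_lt_two
      have h2 : Summable (fun n : ℕ => 1 / ((n : ℝ) + 1) ^ 2) := by
        have := (summable_nat_add_iff 1).mpr h1
        exact this.congr fun n => by push_cast; ring
      exact ((h2.mul_left (2 / Real.pi ^ 2))).congr fun n => by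
        rw [div_mul_div_comm, mul_one, mul_comm (Real.pi ^ 2)]
    apply Summable.of_norm_bounded_eventually_nat hg
    have hten : Tendsto (fun n : ℕ => ((n : ℝ) + 1) ^ 2 * Real.pi ^ 2) atTop atTop := by
      apply Filter.tendsto_atTop_mono (f := fun n : ℕ => (n : ℝ))
      · intro n
        have h0 : (0:ℝ) ≤ (n : ℝ) := Nat.cast_nonneg n
        have hpi2 : (9:ℝ) ≤ Real.pi ^ 2 := by nlinarith [Real.pi_gt_three]
        nlinarith [hpi2, sq_nonneg ((n:ℝ) + 1), h0]
      · exact tendsto_natCast_atTop_atTop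
    filter_upwards [hten.eventually_ge_atTop (2 * ‖z‖ ^ 2)] with n hn
    set A : ℝ := ((n : ℝ) + 1) ^ 2 * Real.pi ^ 2 with hA
    have hA0 : 0 < A := by positivity
    have hnormc : ‖((n : ℂ) + 1) ^ 2 * (Real.pi : ℂ) ^ 2‖ = A := by
      rw [norm_mul, norm_pow, norm_pow]
      have h1 : ‖(n : ℂ) + 1‖ = (n : ℝ) + 1 := by
        rw [show ((n : ℂ) + 1) = (((n : ℝ) + 1 : ℝ) : ℂ) by push_cast; ring]
        rw [Complex.norm_real, Real.norm_eq_abs, abs_of_pos (by positivity)]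
      rw [h1, Complex.norm_real, Real.norm_eq_abs, abs_of_pos Real.pi_pos]
    have hlow : A / 2 ≤ ‖z ^ 2 - ((n : ℂ) + 1) ^ 2 * (Real.pi : ℂ) ^ 2‖ := by
      have h1 : ‖((n : ℂ) + 1) ^ 2 * (Real.pi : ℂ) ^ 2‖ - ‖z ^ 2‖
          ≤ ‖z ^ 2 - ((n : ℂ) + 1) ^ 2 * (Real.pi : ℂ) ^ 2‖ := by
        rw [norm_sub_rev]
        exact norm_sub_norm_le _ _
      have h2 : ‖z ^ 2‖ = ‖z‖ ^ 2 := norm_pow z 2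
      rw [hnormc, h2] at h1
      linarith
    rw [norm_norm, norm_div, norm_one]
    rw [div_le_div_iff₀ (lt_of_lt_of_le (by linarith) hlow) (by positivity)]
    calc (1:ℝ) * (((n:ℝ)+1)^2 * Real.pi^2) = A := by rw [hA]; ring
      _ ≤ 2 * ‖z ^ 2 - ((n : ℂ) + 1) ^ 2 * (Real.pi : ℂ) ^ 2‖ := by linarith
  refine ⟨hsummable, ?_⟩
  -- differentiability of the partial products
  have hderiv : ∀ (j : ℕ) (w : ℂ),
      HasDerivAt (fun w : ℂ => (1 : ℂ) - w ^ 2 / ((j : ℂ) + 1) ^ 2)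
        (-(2 * w / ((j : ℂ) + 1) ^ 2)) w := by
    intro j w
    have h1 := ((hasDerivAt_pow 2 w).div_const (((j : ℂ) + 1) ^ 2)).const_sub 1
    exact h1.congr_deriv (by norm_num)
  have hdiff : ∀ n : ℕ, Differentiable ℂ (fun w : ℂ => (Real.pi : ℂ) * w *
      ∏ j ∈ Finset.range n, ((1 : ℂ) - w ^ 2 / ((j : ℂ) + 1) ^ 2)) := by
    intro n
    apply Differentiable.mul (by fun_prop)
    intro x
    exact DifferentiableAt.fun_finsetProd fun j _ => (hderiv j x).differentiableAt
  -- logDeriv of partial products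
  have hldf : ∀ j : ℕ, logDeriv (fun w : ℂ => (1 : ℂ) - w ^ 2 / ((j : ℂ) + 1) ^ 2) w₀
      = 2 * w₀ / (w₀ ^ 2 - ((j : ℂ) + 1) ^ 2) := by
    intro j
    rw [logDeriv_apply, (hderiv j w₀).deriv]
    rw [div_eq_div_iff (hfacw j) (hne2 j)]
    field_simp [hcj j]
    ring
  have hld : ∀ n : ℕ, logDeriv (fun w : ℂ => (Real.pi : ℂ) * w *
      ∏ j ∈ Finset.range n, ((1 : ℂ) - w ^ 2 / ((j : ℂ) + 1) ^ 2)) w₀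
      = 1 / w₀ + ∑ j ∈ Finset.range n, 2 * w₀ / (w₀ ^ 2 - ((j : ℂ) + 1) ^ 2) := by
    intro n
    have e : (fun w : ℂ => (Real.pi : ℂ) * w *
        ∏ j ∈ Finset.range n, ((1 : ℂ) - w ^ 2 / ((j : ℂ) + 1) ^ 2))
        = fun w : ℂ => (Real.pi : ℂ) * (w *
        ∏ j ∈ Finset.range n, ((1 : ℂ) - w ^ 2 / ((j : ℂ) + 1) ^ 2)) := by
      funext w; ring
    rw [e, logDeriv_const_mul _ _ hpi,
      logDeriv_mul w₀ hw0 (Finset.prod_ne_zero_iff.mpr fun j _ => hfacw j)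
        differentiableAt_fun_id
        (DifferentiableAt.fun_finsetProd fun j _ => (hderiv j w₀).differentiableAt),
      logDeriv_id',
      logDeriv_prod (fun j _ => hfacw j)
        (fun j _ => (hderiv j w₀).differentiableAt)]
    exact congrArg _ (Finset.sum_congr rfl fun j _ => hldf j)
  -- the open set where sin (π w) ≠ 0
  have hUopen : IsOpen {w : ℂ | Complex.sin ((Real.pi : ℂ) * w) ≠ 0} := by
    have hc : Continuous fun w : ℂ => Complex.sin ((Real.pi : ℂ) * w) := by fun_prop
    exact isOpen_compl_singleton.preimage hc
  have hmem : w₀ ∈ {w : ℂ | Complex.sin ((Real.pi : ℂ) * w) ≠ 0} := by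
    simp only [Set.mem_setOf_eq, hw0pi]
    exact hsin
  -- the limit of logDerivs
  have hten := logDeriv_tendsto
    (f := fun n w => (Real.pi : ℂ) * w * ∏ j ∈ Finset.range n, ((1 : ℂ) - w ^ 2 / ((j : ℂ) + 1) ^ 2))
    (g := fun w => Complex.sin ((Real.pi : ℂ) * w)) hUopen hmem
    euler_sin_prod_locally_uniform.tendstoLocallyUniformlyOn
    (Filter.Eventually.of_forall fun n => (hdiff n).differentiableOn)
    (by simpa [hw0pi] using hsin)
  -- summability of the transformed series
  have haj : ∀ j : ℕ, 2 * w₀ / (w₀ ^ 2 - ((j : ℂ) + 1) ^ 2)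
      = 2 * z * (Real.pi : ℂ) * (1 / (z ^ 2 - ((j : ℂ) + 1) ^ 2 * (Real.pi : ℂ) ^ 2)) := by
    intro j
    have h3 : z ^ 2 - ((j : ℂ) + 1) ^ 2 * (Real.pi : ℂ) ^ 2
        = (Real.pi : ℂ) ^ 2 * (w₀ ^ 2 - ((j : ℂ) + 1) ^ 2) := by
      rw [← hw0pi]; ring
    rw [h3, mul_one_div,
      div_eq_div_iff (hne2 j) (mul_ne_zero (pow_ne_zero 2 hpi) (hne2 j)), ← hw0pi]
    ring
  have hsumC : Summable (fun j : ℕ => 1 / (z ^ 2 - ((j : ℂ) + 1) ^ 2 * (Real.pi : ℂ) ^ 2)) :=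
    summable_norm_iff.mp hsummable
  have hS : Summable (fun j : ℕ => 2 * w₀ / (w₀ ^ 2 - ((j : ℂ) + 1) ^ 2)) :=
    ((hsumC.mul_left (2 * z * (Real.pi : ℂ)))).congr fun j => (haj j).symm
  have hlim2 : Tendsto
      (fun n => 1 / w₀ + ∑ j ∈ Finset.range n, 2 * w₀ / (w₀ ^ 2 - ((j : ℂ) + 1) ^ 2))
      atTop (𝓝 (1 / w₀ + ∑' j : ℕ, 2 * w₀ / (w₀ ^ 2 - ((j : ℂ) + 1) ^ 2))) :=
    tendsto_const_nhds.add hS.hasSum.tendsto_sum_nat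
  have heq : logDeriv (fun w => Complex.sin ((Real.pi : ℂ) * w)) w₀
      = 1 / w₀ + ∑' j : ℕ, 2 * w₀ / (w₀ ^ 2 - ((j : ℂ) + 1) ^ 2) :=
    tendsto_nhds_unique (hten.congr fun n => hld n) hlim2
  have hgld : logDeriv (fun w => Complex.sin ((Real.pi : ℂ) * w)) w₀
      = (Real.pi : ℂ) * (Complex.cos z / Complex.sin z) := by
    have h1 : (fun w : ℂ => Complex.sin ((Real.pi : ℂ) * w))
        = Complex.sin ∘ (fun w => (Real.pi : ℂ) * w) := rfl
    rw [h1, logDeriv_comp (Complex.differentiable_sin.differentiableAt) (by fun_prop)]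
    have h2 : deriv (fun w : ℂ => (Real.pi : ℂ) * w) w₀ = (Real.pi : ℂ) := by
      simpa using (((hasDerivAt_id w₀).const_mul ((Real.pi : ℂ)))).deriv
    rw [h2, hw0pi, logDeriv_apply, Complex.deriv_sin]
    ring
  have htsum : (∑' j : ℕ, 2 * w₀ / (w₀ ^ 2 - ((j : ℂ) + 1) ^ 2))
      = 2 * z * (Real.pi : ℂ)
        * ∑' n : ℕ, 1 / (z ^ 2 - ((n : ℂ) + 1) ^ 2 * (Real.pi : ℂ) ^ 2) := by
    rw [tsum_congr haj, tsum_mul_left]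
  have hfin : (Real.pi : ℂ) * (Complex.cos z / Complex.sin z)
      = (Real.pi : ℂ)
        * (1 / z + 2 * z * ∑' n : ℕ, 1 / (z ^ 2 - ((n : ℂ) + 1) ^ 2 * (Real.pi : ℂ) ^ 2)) := by
    rw [← hgld, heq, htsum]
    have h1w : 1 / w₀ = (Real.pi : ℂ) / z := by rw [hw₀def, one_div_div]
    rw [h1w]
    ring
  exact mul_left_cancel₀ hpi hfin
end

section
/- For θ ∈ ℝ, the function t ↦ sech(πt/2)/2 is a probability density on ℝ whose characteristic function is E[e^{iθX}] = sech(θ) = 2/(e^θ + e^{−θ}). -/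
open MeasureTheory Complex Set

noncomputable section

private lemma cpow_pos_real {r : ℝ} (hr : 0 < r) (w : ℂ) :
    (r : ℂ) ^ w = Complex.exp (w * (Real.log r : ℂ)) := by
  rw [Complex.cpow_def_of_ne_zero (by exact_mod_cast hr.ne'),
    Complex.ofReal_log hr.le, mul_comm]

private lemma mellin_one_add {s : ℂ} (hs0 : 0 < s.re) (hs1 : s.re < 1) :
    ∫ u in Ioi (0:ℝ), (u:ℂ) ^ (s - 1) / (1 + u) = ↑Real.pi / Complex.sin (↑Real.pi * s) := by
  have h2 : Complex.Gamma s * Complex.Gamma (1 - s) = ↑Real.pi / Complex.sin (↑Real.pi * s) :=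
    Complex.Gamma_mul_Gamma_one_sub s
  have h1 : Complex.Gamma s * Complex.Gamma (1 - s) = Complex.betaIntegral s (1 - s) := by
    rw [Complex.Gamma_mul_Gamma_eq_betaIntegral hs0 (by simp; linarith)]
    have : s + (1 - s) = 1 := by ring
    rw [this, Complex.Gamma_one, one_mul]
  rw [← h2, h1, Complex.betaIntegral]
  have he : (1:ℂ) - s - 1 = -s := by ring
  rw [intervalIntegral.integral_of_le zero_le_one, MeasureTheory.integral_Ioc_eq_integral_Ioo]
  have himg : (fun u : ℝ => u / (1 + u)) '' Ioi 0 = Ioo 0 1 := by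
    ext y
    constructor
    · rintro ⟨u, hu, rfl⟩
      have hu' : (0:ℝ) < u := hu
      have h1u : (0:ℝ) < 1 + u := by linarith
      constructor
      · positivity
      · rw [div_lt_one h1u]; linarith
    · rintro ⟨hy0, hy1⟩
      refine ⟨y / (1 - y), div_pos hy0 (by linarith), ?_⟩
      have : (1:ℝ) - y ≠ 0 := by linarith
      field_simp
      ring
  have hderiv : ∀ u ∈ Ioi (0:ℝ), HasDerivWithinAt (fun u : ℝ => u / (1 + u))
      (1 / (1 + u) ^ 2) (Ioi 0) u := by
    intro u hu
    have h1u : (1:ℝ) + u ≠ 0 := by have : (0:ℝ) < u := hu; positivity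
    have := (hasDerivAt_id u).div ((hasDerivAt_const u (1:ℝ)).add (hasDerivAt_id u)) h1u
    refine this.hasDerivWithinAt.congr_deriv ?_
    simp only [Pi.add_apply, id]
    ring
  have hinj : InjOn (fun u : ℝ => u / (1 + u)) (Ioi 0) := by
    intro a ha b hb hab
    have ha' : (0:ℝ) < a := ha
    have hb' : (0:ℝ) < b := hb
    have h1 : (1:ℝ) + a ≠ 0 := by positivity
    have h2' : (1:ℝ) + b ≠ 0 := by positivity
    field_simp at hab
    linarith
  rw [← himg, integral_image_eq_integral_abs_deriv_smul measurableSet_Ioi hderiv hinj]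
  refine setIntegral_congr_fun measurableSet_Ioi (fun u hu => ?_)
  have hu' : (0:ℝ) < u := hu
  have h1u : (0:ℝ) < 1 + u := by linarith
  have hx : (0:ℝ) < u / (1 + u) := by positivity
  have h1uc : ((1:ℂ) + (u:ℂ)) ≠ 0 := by
    exact_mod_cast (by positivity : ((1:ℝ) + u) ≠ 0)
  have hc : (1:ℂ) - ((u / (1 + u) : ℝ) : ℂ) = ((1 / (1 + u) : ℝ) : ℂ) := by
    push_cast
    field_simp
    ring
  rw [he, hc, cpow_pos_real hx, cpow_pos_real (by positivity : (0:ℝ) < 1/(1+u)),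
    cpow_pos_real hu']
  have hlog1 : Real.log (u / (1 + u)) = Real.log u - Real.log (1 + u) :=
    Real.log_div hu'.ne' h1u.ne'
  have hlog2 : Real.log (1 / (1 + u)) = -Real.log (1 + u) := by
    rw [one_div, Real.log_inv]
  rw [hlog1, hlog2]
  rw [← Complex.exp_add]
  have harg : (s - 1) * ((Real.log u - Real.log (1 + u) : ℝ) : ℂ) +
      (-s) * ((-Real.log (1 + u) : ℝ) : ℂ) =
      (s - 1) * (Real.log u : ℂ) + ((Real.log (1 + u) : ℝ) : ℂ) := by
    push_cast
    ring
  rw [harg, Complex.exp_add]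
  have hexp : Complex.exp ((Real.log (1 + u) : ℝ) : ℂ) = ((1 + u : ℝ) : ℂ) := by
    rw [← Complex.ofReal_exp, Real.exp_log h1u]
  rw [hexp]
  have habs : |1 / (1 + u) ^ 2| = 1 / (1 + u) ^ 2 := abs_of_pos (by positivity)
  rw [habs, real_smul]
  push_cast
  field_simp
private lemma subst_exp (θ : ℝ) :
    ∫ u in Ioi (0:ℝ), (u:ℂ) ^ ((1/2 + (θ/Real.pi) * I : ℂ) - 1) / (1 + u) =
    ↑Real.pi * ∫ x : ℝ, Complex.exp (θ * x * I) *
        ((1 / (Real.exp (Real.pi * x / 2) + Real.exp (-(Real.pi * x / 2))) : ℝ) : ℂ) := by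
  have hpi : (0:ℝ) < Real.pi := Real.pi_pos
  have himg : (fun x : ℝ => Real.exp (Real.pi * x)) '' univ = Ioi 0 := by
    rw [image_univ]
    ext y
    constructor
    · rintro ⟨x, rfl⟩; exact Real.exp_pos _
    · intro hy
      refine ⟨Real.log y / Real.pi, ?_⟩
      show Real.exp (Real.pi * (Real.log y / Real.pi)) = y
      rw [show Real.pi * (Real.log y / Real.pi) = Real.log y by field_simp, Real.exp_log hy]
  have hderiv : ∀ x ∈ (univ : Set ℝ), HasDerivWithinAt (fun x : ℝ => Real.exp (Real.pi * x))
      (Real.pi * Real.exp (Real.pi * x)) univ x := by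
    intro x _
    have h : HasDerivAt (fun x : ℝ => Real.exp (Real.pi * x))
        (Real.exp (Real.pi * x) * (Real.pi * 1)) x :=
      ((hasDerivAt_id x).const_mul Real.pi).exp
    refine h.hasDerivWithinAt.congr_deriv ?_
    ring
  have hinj : InjOn (fun x : ℝ => Real.exp (Real.pi * x)) univ := by
    intro a _ b _ h
    have := Real.exp_injective h
    exact mul_left_cancel₀ hpi.ne' this
  rw [← himg, integral_image_eq_integral_abs_deriv_smul MeasurableSet.univ hderiv hinj,
    Measure.restrict_univ]
  rw [← MeasureTheory.integral_const_mul]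
  refine integral_congr_ae (Filter.Eventually.of_forall (fun x => ?_))
  dsimp only
  have hE : (0:ℝ) < Real.exp (Real.pi * x / 2) := Real.exp_pos _
  set E : ℝ := Real.exp (Real.pi * x / 2) with hEdef
  have hE2 : Real.exp (Real.pi * x) = E * E := by
    rw [hEdef, ← Real.exp_add]; ring_nf
  have hEinv : Real.exp (-(Real.pi * x / 2)) = E⁻¹ := by
    rw [hEdef, ← Real.exp_neg]
  have habs : |Real.pi * Real.exp (Real.pi * x)| = Real.pi * Real.exp (Real.pi * x) :=
    abs_of_pos (by positivity)
  rw [habs, cpow_pos_real (Real.exp_pos _), Real.log_exp]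
  have harg : ((1/2 + (θ/Real.pi) * I : ℂ) - 1) * ((Real.pi * x : ℝ) : ℂ) =
      ((-(Real.pi * x / 2) : ℝ) : ℂ) + (θ * x * I : ℂ) := by
    have hpic : (Real.pi : ℂ) ≠ 0 := by exact_mod_cast hpi.ne'
    push_cast
    field_simp
    ring
  rw [harg, Complex.exp_add, ← Complex.ofReal_exp]
  rw [real_smul]
  rw [hE2, hEinv]
  have hEc : (E : ℂ) ≠ 0 := by exact_mod_cast hE.ne'
  have hden : ((1:ℂ) + (E:ℂ) * (E:ℂ)) ≠ 0 := by
    exact_mod_cast (by positivity : (1:ℝ) + E * E ≠ 0)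
  have hdensq : ((1:ℂ) + (E:ℂ) ^ 2) ≠ 0 := by
    exact_mod_cast (by positivity : (1:ℝ) + E ^ 2 ≠ 0)
  have hden2 : ((E:ℂ) + (E:ℂ)⁻¹) ≠ 0 := by
    exact_mod_cast (by positivity : (E:ℝ) + E⁻¹ ≠ 0)
  push_cast
  field_simp
  have hden' : (E:ℂ) * E + 1 ≠ 0 := by
    exact_mod_cast (by positivity : (E:ℝ) * E + 1 ≠ 0)
  rw [eq_div_iff (by rwa [add_comm] at hdensq)]
  ring

theorem char_fun_aux (θ : ℝ) :
    ∫ x : ℝ, Complex.exp (θ * x * I) *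
          ((1 / (Real.exp (Real.pi * x / 2) + Real.exp (-(Real.pi * x / 2))) : ℝ) : ℂ) =
        ((2 / (Real.exp θ + Real.exp (-θ)) : ℝ) : ℂ) := by
  have hpi : (0:ℝ) < Real.pi := Real.pi_pos
  have hpic : (Real.pi : ℂ) ≠ 0 := by exact_mod_cast hpi.ne'
  have hs0 : (0:ℝ) < ((1/2 + (θ/Real.pi) * I : ℂ)).re := by simp
  have hs1 : ((1/2 + (θ/Real.pi) * I : ℂ)).re < 1 := by simp; norm_num
  have h := mellin_one_add hs0 hs1
  rw [subst_exp θ] at h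
  have hsin : Complex.sin (↑Real.pi * (1/2 + (θ/Real.pi) * I : ℂ)) =
      ((Real.cosh θ : ℝ) : ℂ) := by
    have : (↑Real.pi * (1/2 + (θ/Real.pi) * I : ℂ)) = ↑Real.pi / 2 + (θ:ℂ) * I := by
      field_simp
    rw [this, Complex.sin_add, Complex.sin_pi_div_two, Complex.cos_pi_div_two,
      Complex.cos_mul_I, Complex.ofReal_cosh]
    ring
  rw [hsin] at h
  have hcosh : (0:ℝ) < Real.cosh θ := Real.cosh_pos θ
  have hcoshc : ((Real.cosh θ : ℝ) : ℂ) ≠ 0 := by exact_mod_cast hcosh.ne'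
  have hmain : (∫ x : ℝ, Complex.exp (θ * x * I) *
      ((1 / (Real.exp (Real.pi * x / 2) + Real.exp (-(Real.pi * x / 2))) : ℝ) : ℂ)) =
      1 / ((Real.cosh θ : ℝ) : ℂ) :=
    mul_left_cancel₀ hpic (by rw [h, mul_one_div])
  rw [hmain, Real.cosh_eq]
  push_cast
  have : ((Real.exp θ : ℝ) : ℂ) + ((Real.exp (-θ) : ℝ) : ℂ) ≠ 0 := by
    exact_mod_cast (by positivity : Real.exp θ + Real.exp (-θ) ≠ 0)
  field_simp

/-- `t ↦ sech(πt/2)/2` is a probability density on `ℝ` whose characteristic function is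
`θ ↦ sech θ = 2/(e^θ + e^{-θ})`. -/
theorem sech_density_char_fun :
    (∀ x : ℝ, 0 ≤ 1 / (Real.exp (Real.pi * x / 2) + Real.exp (-(Real.pi * x / 2)))) ∧
    (∫ x : ℝ, 1 / (Real.exp (Real.pi * x / 2) + Real.exp (-(Real.pi * x / 2))) = 1) ∧
    (∀ θ : ℝ,
      ∫ x : ℝ, Complex.exp (θ * x * I) *
          ((1 / (Real.exp (Real.pi * x / 2) + Real.exp (-(Real.pi * x / 2))) : ℝ) : ℂ) =
        ((2 / (Real.exp θ + Real.exp (-θ)) : ℝ) : ℂ)) := by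
  refine ⟨fun x => by positivity, ?_, fun θ => char_fun_aux θ⟩
  have h0 := char_fun_aux 0
  simp only [Complex.ofReal_zero, zero_mul, Complex.exp_zero, one_mul] at h0
  have h1 := (integral_ofReal (𝕜 := ℂ)
    (f := fun x : ℝ => 1 / (Real.exp (Real.pi * x / 2) + Real.exp (-(Real.pi * x / 2))))).symm.trans h0
  have h2 : (∫ x : ℝ, 1 / (Real.exp (Real.pi * x / 2) + Real.exp (-(Real.pi * x / 2))))
      = 2 / (Real.exp 0 + Real.exp (-0)) := Complex.ofReal_injective h1
  rw [h2]
  norm_num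

end
end

section
/- The parabolic region Ω = {x + iy ∈ ℂ : x > y² − 1} is contained in a wedge of arbitrarily small aperture: for every α > 0 there exist c ∈ ℝ and a rotation/translation T such that Ω ⊆ T(W_α), where W_α = {z ≠ 0 : 0 < Arg(z) < α}. -/
open Complex Set

/-- The parabolic region `{x + iy : x > y² − 1}` is contained in the image, under a
rotation and a translation, of the wedge `W_α = {z ≠ 0 : 0 < Arg z < α}`, for every
aperture `α > 0`. -/
theorem parabola_in_small_wedge :
    ∀ α : ℝ, 0 < α →
      ∃ w c : ℂ, ‖w‖ = 1 ∧
        {z : ℂ | z.re > z.im ^ 2 - 1} ⊆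
          (fun z => w * z + c) '' {z : ℂ | z ≠ 0 ∧ 0 < Complex.arg z ∧ Complex.arg z < α} := by
  intro α hα
  have hπ : (3 : ℝ) < Real.pi := Real.pi_gt_three
  set β : ℝ := min α 1 / 2 with hβdef
  have hβ0 : 0 < β := by
    have : 0 < min α 1 := lt_min hα one_pos
    positivity
  have hβle : β ≤ 1 / 2 := by
    have : min α 1 ≤ 1 := min_le_right _ _
    simp only [hβdef]; linarith
  have hβlt : β < Real.pi / 2 := by linarith
  have h2β : 2 * β ≤ α := by
    have : min α 1 ≤ α := min_le_left _ _
    simp only [hβdef]; linarith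
  set t : ℝ := Real.tan β with htdef
  have ht : 0 < t := Real.tan_pos_of_pos_of_lt_pi_div_two hβ0 hβlt
  set R : ℝ := 1 + (1 / t) ^ 2 with hRdef
  refine ⟨Complex.exp (-(β : ℂ) * I), -(R : ℂ), ?_, ?_⟩
  · have : (-(β : ℂ)) = ((-β : ℝ) : ℂ) := by push_cast; ring
    rw [this, Complex.norm_exp_ofReal_mul_I]
  · intro z hz
    simp only [mem_setOf_eq] at hz
    set v : ℂ := z + (R : ℂ) with hvdef
    have hvre : v.re = z.re + R := by simp [hvdef]
    have hvim : v.im = z.im := by simp [hvdef]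
    have hu : 0 < 1 / t := by positivity
    have htu : t * (1 / t) = 1 := by field_simp
    have hvre_pos : 0 < v.re := by
      rw [hvre, hRdef]
      nlinarith [sq_nonneg z.im, sq_nonneg (1 / t)]
    have hv0 : v ≠ 0 := fun h => by simp [h] at hvre_pos
    have key : |v.im| < t * v.re := by
      rw [hvim, hvre, hRdef]
      have h2 : t * (z.im ^ 2 - 1) < t * z.re := mul_lt_mul_of_pos_left hz ht
      have h3 : t * (1 / t) ^ 2 = 1 / t := by field_simp
      have h4 : 2 * |z.im| ≤ t * z.im ^ 2 + 1 / t := by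
        nlinarith [sq_nonneg (t * |z.im| - 1), _root_.sq_abs z.im, mul_pos ht ht, htu]
      nlinarith [abs_nonneg z.im]
    rw [abs_lt] at key
    have hargv_lt : |Complex.arg v| < Real.pi / 2 := by
      rw [Complex.abs_arg_lt_pi_div_two_iff]; left; exact hvre_pos
    rw [abs_lt] at hargv_lt
    have hargv_eq : Complex.arg v = Real.arctan (v.im / v.re) := by
      rw [← Complex.tan_arg v, Real.arctan_tan hargv_lt.1 hargv_lt.2]
    have hβeq : β = Real.arctan t := by
      rw [htdef, Real.arctan_tan (by linarith) hβlt]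
    have hlow : -t < v.im / v.re := by
      rw [neg_lt, ← neg_div]
      exact (div_lt_iff₀ hvre_pos).2 (by linarith [key.1])
    have hupp : v.im / v.re < t := (div_lt_iff₀ hvre_pos).2 key.2
    have hargv_abs : -β < Complex.arg v ∧ Complex.arg v < β := by
      rw [hargv_eq, hβeq]
      exact ⟨by rw [← Real.arctan_neg]; exact Real.arctan_strictMono hlow,
        Real.arctan_strictMono hupp⟩
    set u : ℂ := Complex.exp ((β : ℂ) * I) * v with hudef
    have hu0 : u ≠ 0 := mul_ne_zero (Complex.exp_ne_zero _) hv0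
    have hargu : Complex.arg u = β + Complex.arg v := by
      have h1 : u = ((‖v‖ : ℝ) : ℂ) *
          (Complex.cos ((β + Complex.arg v : ℝ) : ℂ) +
            Complex.sin ((β + Complex.arg v : ℝ) : ℂ) * I) := by
        rw [← Complex.exp_mul_I, hudef]
        conv_lhs => rw [← Complex.norm_mul_exp_arg_mul_I v]
        rw [mul_left_comm, ← Complex.exp_add]
        congr 1
        push_cast
        ring
      rw [h1]
      exact Complex.arg_mul_cos_add_sin_mul_I (norm_pos_iff.mpr hv0)
        ⟨by linarith [hargv_abs.1, Real.pi_gt_three], by linarith [hargv_abs.2]⟩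
    refine ⟨u, ⟨hu0, ?_, ?_⟩, ?_⟩
    · rw [hargu]; linarith [hargv_abs.1]
    · rw [hargu]; linarith [hargv_abs.2]
    · show Complex.exp (-(β : ℂ) * I) * u + -(R : ℂ) = z
      rw [hudef, ← mul_assoc, ← Complex.exp_add]
      have : -(β : ℂ) * I + (β : ℂ) * I = 0 := by ring
      rw [this, Complex.exp_zero, one_mul, hvdef]
      ring
end
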